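/- Let μ₋ > 0, 0 ≤ ν₋ < 1/2, let k ∈ ℝ³ be a unit vector, and let q₊ = q(E − k⊗k) + q_k k⊗k ∈ Sym₃ be axisymmetric with q ≠ q_k. Suppose either q_k·q < 0, or q_k·q > 0 and (1−ν₋)·min(|q_k|,|q|) < ν₋·max(|q_k|,|q|). Then the maximum of 𝒦₋(n,q₊) over unit vectors n ∈ ℝ³ equals ((1−ν₋)/(2μ₋))(q_k² + q²) − (ν₋/μ₋)·q_k·q, and it is attained exactly at the unit vectors n whose projection onto k satisfies (n·k)² = ((1−ν₋)q_k − ν₋q)/(q_k − q). In particular the maximizing normal is not unique: every unit vector with this value of (n·k)² is a maximizer. -/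

import Mathlib

open Matrix

noncomputable section

/-- 3×3 real matrices; symmetric ones model Sym₃. -/
abbrev Mat := Matrix (Fin 3) (Fin 3) ℝ

/-- Inner product on matrices: a:b = tr(ab). -/
def inn (a b : Mat) : ℝ := (a * b).trace

/-- Isotropic elasticity tensor with Lamé parameters l, m: ε ↦ l(tr ε)E + 2mε. -/
def isoC (l m : ℝ) (e : Mat) : Mat := (l * e.trace) • (1 : Mat) + (2*m) • e

/-- The interface operator K(n) for material parameters (μ, ν):
K(n):q = (1/(2μ))(qₙ⊗n + n⊗qₙ − (qₙₙ/(1−ν)) n⊗n). -/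
def Kop (μ ν : ℝ) (n : Fin 3 → ℝ) (q : Mat) : Mat :=
  (1/(2*μ)) • (vecMulVec (q.mulVec n) n + vecMulVec n (q.mulVec n)
    - ((n ⬝ᵥ q.mulVec n)/(1-ν)) • vecMulVec n n)

lemma mulVec_vecMulVec (u v w : Fin 3 → ℝ) :
    (vecMulVec u v).mulVec w = (v ⬝ᵥ w) • u := by
  funext i
  simp [Matrix.mulVec, vecMulVec_apply, dotProduct, Fin.sum_univ_three]
  ring

lemma trace_mul_vecMulVec (A : Mat) (u v : Fin 3 → ℝ) :
    (A * vecMulVec u v).trace = v ⬝ᵥ A.mulVec u := by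
  simp [Matrix.trace, Matrix.diag, Matrix.mul_apply, vecMulVec_apply, Matrix.mulVec,
    dotProduct, Fin.sum_univ_three]
  ring

lemma qp_mulVec (k : Fin 3 → ℝ) (qv qk : ℝ) (w : Fin 3 → ℝ) :
    (qv • ((1 : Mat) - vecMulVec k k) + qk • vecMulVec k k).mulVec w
      = qv • w + ((qk - qv) * (k ⬝ᵥ w)) • k := by
  simp [Matrix.add_mulVec, Matrix.sub_mulVec, Matrix.smul_mulVec, mulVec_vecMulVec,
    Matrix.one_mulVec]
  funext i
  simp [smul_eq_mul]
  ring

lemma Kform_eval (μm νm : ℝ)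
    (k : Fin 3 → ℝ) (hk : k ⬝ᵥ k = 1)
    (qv qk : ℝ) (qp : Mat)
    (hqp : qp = qv • ((1 : Mat) - vecMulVec k k) + qk • vecMulVec k k)
    (nvec : Fin 3 → ℝ) (hn : nvec ⬝ᵥ nvec = 1) :
    inn qp (Kop μm νm nvec qp)
      = (1/(2*μm)) * (2*(qv^2 + 2*qv*(qk-qv)*(k ⬝ᵥ nvec)^2 + (qk-qv)^2*(k ⬝ᵥ nvec)^2)
          - (qv + (qk-qv)*(k ⬝ᵥ nvec)^2)^2/(1-νm)) := by
  subst hqp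
  simp only [inn, Kop, Matrix.mul_smul, Matrix.trace_smul, Matrix.mul_add, Matrix.mul_sub,
    Matrix.trace_add, Matrix.trace_sub, trace_mul_vecMulVec, qp_mulVec, smul_eq_mul]
  simp [dotProduct_add, dotProduct_smul, add_dotProduct, smul_dotProduct, smul_eq_mul,
    hn, hk, dotProduct_comm nvec k]
  exact Or.inl (by ring)


/-- for an axisymmetric tensor q₊ = q(E − k⊗k) + q_k k⊗k in the inclined
regime, the maximum of 𝒦₋(n,q₊) over unit normals equals
((1−ν)/(2μ))(q_k² + q²) − (ν/μ)q_k q, and a unit vector n is a maximizer if and only if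
(n·k)² = ((1−ν)q_k − νq)/(q_k − q); in particular the maximizer is not unique. -/
theorem Kform_max_axisymmetric
    (μm νm : ℝ) (hμ : 0 < μm) (hν0 : 0 ≤ νm) (hν : νm < 1/2)
    (k : Fin 3 → ℝ) (hk : k ⬝ᵥ k = 1)
    (qv qk : ℝ) (hne : qv ≠ qk)
    (qp : Mat) (hqp : qp = qv • ((1 : Mat) - vecMulVec k k) + qk • vecMulVec k k)
    (hcase : qk * qv < 0 ∨
      (0 < qk * qv ∧ (1-νm) * min |qk| |qv| < νm * max |qk| |qv|)) :
    (∀ nvec : Fin 3 → ℝ, nvec ⬝ᵥ nvec = 1 →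
        inn qp (Kop μm νm nvec qp)
          ≤ (1-νm)/(2*μm) * (qk^2 + qv^2) - νm/μm * (qk*qv))
    ∧ ∀ nvec : Fin 3 → ℝ, nvec ⬝ᵥ nvec = 1 →
        (inn qp (Kop μm νm nvec qp)
            = (1-νm)/(2*μm) * (qk^2 + qv^2) - νm/μm * (qk*qv)
          ↔ (nvec ⬝ᵥ k)^2 = ((1-νm)*qk - νm*qv)/(qk - qv)) := by
  have hν1 : (0:ℝ) < 1 - νm := by linarith
  have hμ' : μm ≠ 0 := ne_of_gt hμ
  have hν1' : (1:ℝ) - νm ≠ 0 := ne_of_gt hν1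
  have hkq : qk - qv ≠ 0 := sub_ne_zero.mpr (Ne.symm hne)
  -- the gap identity
  have key : ∀ nvec : Fin 3 → ℝ, nvec ⬝ᵥ nvec = 1 →
      ((1-νm)/(2*μm) * (qk^2 + qv^2) - νm/μm * (qk*qv)) - inn qp (Kop μm νm nvec qp)
        = ((qk - qv)*(nvec ⬝ᵥ k)^2 - ((1-νm)*qk - νm*qv))^2 / (2*μm*(1-νm)) := by
    intro nvec hn
    rw [Kform_eval μm νm k hk qv qk qp hqp nvec hn, dotProduct_comm k nvec]
    field_simp
    ring
  constructor
  · intro nvec hn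
    have h := key nvec hn
    have hpos : ((qk - qv)*(nvec ⬝ᵥ k)^2 - ((1-νm)*qk - νm*qv))^2 / (2*μm*(1-νm)) ≥ 0 := by
      positivity
    linarith
  · intro nvec hn
    have h := key nvec hn
    constructor
    · intro he
      rw [he, sub_self] at h
      have h2 : ((qk - qv)*(nvec ⬝ᵥ k)^2 - ((1-νm)*qk - νm*qv))^2 = 0 := by
        by_contra h3
        have : ((qk - qv)*(nvec ⬝ᵥ k)^2 - ((1-νm)*qk - νm*qv))^2 / (2*μm*(1-νm)) ≠ 0 :=
          div_ne_zero h3 (by positivity)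
        exact this h.symm
      have h4 : (qk - qv)*(nvec ⬝ᵥ k)^2 - ((1-νm)*qk - νm*qv) = 0 := by
        exact pow_eq_zero_iff (n := 2) (by norm_num) |>.mp h2
      rw [eq_div_iff hkq]
      linarith [h4]
    · intro ht
      have h4 : (qk - qv)*(nvec ⬝ᵥ k)^2 - ((1-νm)*qk - νm*qv) = 0 := by
        rw [ht]
        field_simp
        ring
      rw [h4] at h
      simp at h
      linarith
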